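/- The centralizer of the derivation x·∂/∂x + ∂/∂y inside the space of derivations of the form (a·x + H(y))·∂/∂x + b·∂/∂y of the ring ℂ[x,y][e^y] (where H ranges over polynomials in y times powers of e^y) is spanned by x·∂/∂x, ∂/∂y, and e^y·∂/∂x. -/

import Mathlib

open MvPolynomial

noncomputable section

/-- The ring `ℂ[x,y,t]`, where `t` plays the role of `e^y` (so `∂/∂y` sends `t ↦ t`):
`x = X 0`, `y = X 1`, `t = X 2`. -/
abbrev R3 : Type := MvPolynomial (Fin 3) ℂ

/-- The Lie algebra of derivations of `ℂ[x,y,t]`. -/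
abbrev Der3 : Type := Derivation ℂ R3 R3

def Xv : R3 := X 0
def Yv : R3 := X 1
/-- `t`, behaving as `e^y`. -/
def Tv : R3 := X 2

/-- The derivation with `x ↦ p`, `y ↦ q`, `t ↦ r`. -/
def vf3 (p q r : R3) : Der3 := MvPolynomial.mkDerivation ℂ ![p, q, r]

/-- Derivations of the form `(a·x + H(y,e^y))·∂/∂x + b·∂/∂y` (so `t = e^y` goes to `b·t`). -/
def S : Set Der3 :=
  {E | ∃ a b : ℂ, ∃ H ∈ Algebra.adjoin ℂ ({Yv, Tv} : Set R3),
    E = vf3 (C a * Xv + H) (C b) (C b * Tv)}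

/- ### Auxiliary lemmas -/

lemma vf3_apply_X (p q r : R3) (i : Fin 3) : vf3 p q r (X i) = ![p, q, r] i :=
  mkDerivation_X ℂ _ i

lemma vf3_add (p q r p' q' r' : R3) :
    vf3 p q r + vf3 p' q' r' = vf3 (p + p') (q + q') (r + r') := by
  apply derivation_ext
  intro i
  fin_cases i <;> simp [vf3_apply_X]

lemma vf3_smul (c : ℂ) (p q r : R3) : c • vf3 p q r = vf3 (c • p) (c • q) (c • r) := by
  apply derivation_ext
  intro i
  fin_cases i <;> simp [vf3_apply_X]

lemma D_apply (p : R3) :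
    vf3 Xv 1 Tv p = Xv * pderiv 0 p + pderiv 1 p + Tv * pderiv 2 p := by
  have h : vf3 Xv 1 Tv
      = Xv • (pderiv (R := ℂ) (0 : Fin 3)) + pderiv 1 + Tv • pderiv 2 := by
    apply derivation_ext
    intro i
    fin_cases i <;> simp [vf3_apply_X, Xv, Tv]
  rw [h]
  simp [smul_eq_mul]

lemma sub_add_single_cancel {s : Fin 3 →₀ ℕ} {i : Fin 3} (h : s i ≠ 0) :
    s - Finsupp.single i 1 + Finsupp.single i 1 = s := by
  ext a
  simp only [Finsupp.add_apply, Finsupp.tsub_apply, Finsupp.single_apply]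
  rcases eq_or_ne i a with rfl | ha
  · simp only [if_pos rfl]
    split <;> omega
  · simp [ha]

lemma coeff_pderiv (i : Fin 3) (p : R3) (m : Fin 3 →₀ ℕ) :
    coeff m (pderiv i p) = ((m i : ℂ) + 1) * coeff (m + Finsupp.single i 1) p := by
  induction p using MvPolynomial.induction_on' with
  | add f g hf hg => simp only [map_add, coeff_add, hf, hg]; ring
  | monomial s a =>
    rw [pderiv_monomial, coeff_monomial, coeff_monomial]
    rcases eq_or_ne s (m + Finsupp.single i 1) with rfl | hs
    · rw [if_pos rfl, if_pos]
      · simp only [Finsupp.add_apply, Finsupp.single_eq_same]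
        push_cast
        ring
      · rw [add_tsub_cancel_right]
    · rw [if_neg hs, mul_zero]
      by_cases h0 : s i = 0
      · rw [h0]
        simp
      · rw [if_neg]
        intro hc
        exact hs (by rw [← sub_add_single_cancel h0, hc])

lemma coeff_Tv_mul_pderiv (p : R3) (m : Fin 3 →₀ ℕ) :
    coeff m (Tv * pderiv 2 p) = (m 2 : ℂ) * coeff m p := by
  rw [Tv, coeff_X_mul']
  by_cases h : (2 : Fin 3) ∈ m.support
  · rw [if_pos h, coeff_pderiv]
    have h2 : m 2 ≠ 0 := Finsupp.mem_support_iff.mp h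
    rw [sub_add_single_cancel h2]
    congr 1
    have ht : ((m - Finsupp.single 2 1 : Fin 3 →₀ ℕ)) 2 = m 2 - 1 := by
      simp [Finsupp.tsub_apply]
    rw [ht]
    have : (m 2 - 1 : ℕ) + 1 = m 2 := by omega
    exact_mod_cast congrArg (Nat.cast : ℕ → ℂ) this
  · rw [if_neg h]
    have h2 : m 2 = 0 := by simpa [Finsupp.mem_support_iff] using h
    rw [h2]
    simp

lemma coeff_zero_of_x (H : R3) (hv : H ∈ supported ℂ ({1, 2} : Set (Fin 3)))
    {m : Fin 3 →₀ ℕ} (hm : m 0 ≠ 0) : coeff m H = 0 := by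
  by_contra hc
  have h0 : (0 : Fin 3) ∈ H.vars :=
    (mem_vars 0).2 ⟨m, mem_support_iff.2 hc, Finsupp.mem_support_iff.2 hm⟩
  have := mem_supported.mp hv h0
  simp at this

lemma adjoin_eq_supported :
    Algebra.adjoin ℂ ({Yv, Tv} : Set R3) = supported ℂ ({1, 2} : Set (Fin 3)) := by
  have h : ({Yv, Tv} : Set R3) = X '' ({1, 2} : Set (Fin 3)) := by
    simp [Yv, Tv, Set.image_insert_eq]
  rw [h]
  rfl

lemma der_add_lie (E1 E2 D : Der3) : ⁅E1 + E2, D⁆ = ⁅E1, D⁆ + ⁅E2, D⁆ := by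
  apply Derivation.ext
  intro p
  simp only [Derivation.commutator_apply, Derivation.add_apply, map_add]
  ring

lemma der_smul_lie (r : ℂ) (E D : Der3) : ⁅r • E, D⁆ = r • ⁅E, D⁆ := by
  apply Derivation.ext
  intro p
  simp only [Derivation.commutator_apply, Derivation.smul_apply, smul_sub]
  rw [Derivation.map_smul]

lemma poly_key (H : R3) (hv : H ∈ supported ℂ ({1, 2} : Set (Fin 3)))
    (heq : ∀ m : Fin 3 →₀ ℕ,
      ((m 1 : ℂ) + 1) * coeff (m + Finsupp.single 1 1) H + (m 2 : ℂ) * coeff m H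
        = coeff m H) :
    H = C (coeff (Finsupp.single 2 1) H) * Tv := by
  have key0 : ∀ m : Fin 3 →₀ ℕ, m 2 ≠ 1 → coeff m H = 0 := by
    intro m hm2
    by_contra hc
    have grow : ∀ k, coeff (m + Finsupp.single 1 k) H ≠ 0 := by
      intro k
      induction k with
      | zero => simpa using hc
      | succ k ih =>
        have h := heq (m + Finsupp.single 1 k)
        have e1 : ((m + Finsupp.single 1 k : Fin 3 →₀ ℕ)) 1 = m 1 + k := by simp
        have e2 : ((m + Finsupp.single 1 k : Fin 3 →₀ ℕ)) 2 = m 2 := by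
          simp [Finsupp.single_apply]
        have eadd : m + Finsupp.single 1 k + Finsupp.single 1 1
            = m + Finsupp.single 1 (k + 1) := by
          rw [add_assoc, ← Finsupp.single_add]
        rw [e1, e2, eadd] at h
        intro hz
        rw [hz, mul_zero, zero_add] at h
        have hsub : ((m 2 : ℂ) - 1) * coeff (m + Finsupp.single 1 k) H = 0 := by
          linear_combination h
        rcases mul_eq_zero.mp hsub with h' | h'
        · exact hm2 (by exact_mod_cast sub_eq_zero.mp h')
        · exact ih h'
    apply grow (H.totalDegree + 1)
    apply coeff_eq_zero_of_totalDegree_lt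
    have h1mem : (1 : Fin 3) ∈ (m + Finsupp.single 1 (H.totalDegree + 1)).support := by
      simp [Finsupp.mem_support_iff]
    have hval : ((m + Finsupp.single 1 (H.totalDegree + 1) : Fin 3 →₀ ℕ)) 1
        = m 1 + (H.totalDegree + 1) := by simp
    have hle := Finset.single_le_sum
      (f := fun i => ((m + Finsupp.single 1 (H.totalDegree + 1) : Fin 3 →₀ ℕ)) i)
      (fun _ _ => Nat.zero_le _) h1mem
    rw [hval] at hle
    omega
  have key1 : ∀ m : Fin 3 →₀ ℕ, m 2 = 1 → m 1 ≠ 0 → coeff m H = 0 := by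
    intro m h2 h1
    have hm : m = (m - Finsupp.single 1 1) + Finsupp.single 1 1 :=
      (sub_add_single_cancel h1).symm
    have h := heq (m - Finsupp.single 1 1)
    have e2 : ((m - Finsupp.single 1 1 : Fin 3 →₀ ℕ)) 2 = 1 := by
      rw [Finsupp.tsub_apply]
      simpa [Finsupp.single_apply] using h2
    rw [e2, ← hm] at h
    have hz : ((((m - Finsupp.single 1 1 : Fin 3 →₀ ℕ)) 1 : ℂ) + 1) * coeff m H = 0 := by
      push_cast at h ⊢
      linear_combination h
    rcases mul_eq_zero.mp hz with h' | h'
    · exact absurd h' (Nat.cast_add_one_ne_zero _)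
    · exact h'
  apply MvPolynomial.ext
  intro m
  rw [coeff_C_mul, Tv, coeff_X']
  rcases eq_or_ne (Finsupp.single 2 1 : Fin 3 →₀ ℕ) m with rfl | hne
  · simp
  · rw [if_neg hne, mul_zero]
    by_cases h0 : m 0 = 0
    · by_cases h2 : m 2 = 1
      · by_cases h1 : m 1 = 0
        · exfalso
          apply hne
          ext i
          fin_cases i <;> simp [Finsupp.single_apply, h0, h1, h2]
        · exact key1 m h2 h1
      · exact key0 m h2
    · exact coeff_zero_of_x H hv h0

/-- the centralizer of `x·∂/∂x + ∂/∂y` in the space of derivations of the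
form `(a·x + H)·∂/∂x + b·∂/∂y` is spanned by `x·∂/∂x`, `∂/∂y` and `e^y·∂/∂x`. -/
theorem stmt15 :
    {E ∈ S | ⁅E, vf3 Xv 1 Tv⁆ = 0} =
      (Submodule.span ℂ ({vf3 Xv 0 0, vf3 0 1 Tv, vf3 Tv 0 0} : Set Der3) : Set Der3) := by
  ext E
  simp only [Set.mem_setOf_eq, SetLike.mem_coe]
  constructor
  · rintro ⟨⟨a, b, H, hH, rfl⟩, hbr⟩
    have hsup : H ∈ supported ℂ ({1, 2} : Set (Fin 3)) := adjoin_eq_supported ▸ hH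
    have h0 : (⁅vf3 (C a * Xv + H) (C b) (C b * Tv), vf3 Xv 1 Tv⁆ : Der3) (X 0) = 0 := by
      rw [hbr]; simp
    rw [Derivation.commutator_apply] at h0
    have hDX0 : vf3 Xv 1 Tv (X (0 : Fin 3)) = Xv := by simp [vf3_apply_X]
    have hEX0 : vf3 (C a * Xv + H) (C b) (C b * Tv) (X (0 : Fin 3)) = C a * Xv + H := by
      simp [vf3_apply_X]
    have hEXv : vf3 (C a * Xv + H) (C b) (C b * Tv) Xv = C a * Xv + H := hEX0
    have hDXv : vf3 Xv 1 Tv Xv = Xv := hDX0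
    rw [hDX0, hEXv, hEX0] at h0
    have hDlin : vf3 Xv 1 Tv (C a * Xv + H)
        = C a * Xv + vf3 Xv 1 Tv H := by
      rw [map_add]
      congr 1
      rw [← smul_eq_C_mul, Derivation.map_smul, hDXv, smul_eq_C_mul]
    rw [hDlin] at h0
    have hHD : H = vf3 Xv 1 Tv H := by linear_combination h0
    have hp0 : pderiv (0 : Fin 3) H = 0 := by
      apply pderiv_eq_zero_of_notMem_vars
      intro hmem
      have := mem_supported.mp hsup hmem
      simp at this
    have heq : ∀ m : Fin 3 →₀ ℕ,
        ((m 1 : ℂ) + 1) * coeff (m + Finsupp.single 1 1) H + (m 2 : ℂ) * coeff m H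
          = coeff m H := by
      intro m
      have hc := congrArg (coeff m) hHD
      rw [D_apply, hp0, mul_zero, zero_add, coeff_add, _root_.coeff_pderiv,
        coeff_Tv_mul_pderiv] at hc
      exact hc.symm
    have hH2 := poly_key H hsup heq
    set c := coeff (Finsupp.single 2 1) H with hcdef
    have hE : vf3 (C a * Xv + H) (C b) (C b * Tv)
        = a • vf3 Xv 0 0 + b • vf3 0 1 Tv + c • vf3 Tv 0 0 := by
      rw [vf3_smul, vf3_smul, vf3_smul, vf3_add, vf3_add]
      have e1 : a • Xv + b • (0 : R3) + c • Tv = C a * Xv + C c * Tv := by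
        simp [smul_eq_C_mul]
      have e2 : a • (0 : R3) + b • (1 : R3) + c • (0 : R3) = C b := by
        simp [smul_eq_C_mul]
      have e3 : a • (0 : R3) + b • Tv + c • (0 : R3) = C b * Tv := by
        simp [smul_eq_C_mul]
      rw [e1, e2, e3, hH2]
    rw [hE]
    refine add_mem (add_mem ?_ ?_) ?_ <;>
      exact Submodule.smul_mem _ _ (Submodule.subset_span (by simp))
  · intro hE
    induction hE using Submodule.span_induction with
    | mem x hx =>
      simp only [Set.mem_insert_iff, Set.mem_singleton_iff] at hx
      rcases hx with rfl | rfl | rfl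
      · refine ⟨⟨1, 0, 0, zero_mem _, ?_⟩, ?_⟩
        · simp
        · apply derivation_ext
          intro i
          rw [Derivation.commutator_apply]
          fin_cases i <;>
            simp [vf3_apply_X, Xv, Tv]
      · refine ⟨⟨0, 1, 0, zero_mem _, ?_⟩, ?_⟩
        · simp
        · apply derivation_ext
          intro i
          rw [Derivation.commutator_apply]
          fin_cases i <;>
            simp [vf3_apply_X, Xv, Tv]
      · refine ⟨⟨0, 0, Tv, Algebra.subset_adjoin (by simp), ?_⟩, ?_⟩
        · simp
        · apply derivation_ext
          intro i
          rw [Derivation.commutator_apply]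
          fin_cases i <;>
            simp [vf3_apply_X, Xv, Tv]
    | zero =>
      refine ⟨⟨0, 0, 0, zero_mem _, ?_⟩,
        by apply Derivation.ext; intro p; simp [Derivation.commutator_apply]⟩
      apply derivation_ext
      intro i
      fin_cases i <;> simp [vf3_apply_X]
    | add x y hx hy ihx ihy =>
      obtain ⟨⟨a1, b1, H1, hH1, rfl⟩, hb1⟩ := ihx
      obtain ⟨⟨a2, b2, H2, hH2, rfl⟩, hb2⟩ := ihy
      refine ⟨⟨a1 + a2, b1 + b2, H1 + H2, add_mem hH1 hH2, ?_⟩,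
        by rw [der_add_lie, hb1, hb2, add_zero]⟩
      have e1 : C (a1 + a2) * Xv + (H1 + H2)
          = (C a1 * Xv + H1) + (C a2 * Xv + H2) := by
        rw [map_add]; ring
      have e2 : (C (b1 + b2) : R3) = C b1 + C b2 := map_add C b1 b2
      have e3 : C (b1 + b2) * Tv = C b1 * Tv + C b2 * Tv := by
        rw [map_add]; ring
      rw [e1, e3, e2, ← vf3_add]
    | smul r x hx ihx =>
      obtain ⟨⟨a, b, H, hH, rfl⟩, hb⟩ := ihx
      refine ⟨⟨r * a, r * b, r • H, Subalgebra.smul_mem _ hH r, ?_⟩,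
        by rw [der_smul_lie, hb, smul_zero]⟩
      have e1 : C (r * a) * Xv + r • H = r • (C a * Xv + H) := by
        rw [smul_add, smul_eq_C_mul H, smul_eq_C_mul (C a * Xv), map_mul]
        ring
      have e2 : (C (r * b) : R3) = r • (C b : R3) := by
        rw [smul_eq_C_mul, map_mul]
      have e3 : C (r * b) * Tv = r • (C b * Tv) := by
        rw [smul_eq_C_mul, map_mul]
        ring
      rw [e1, e3, e2, ← vf3_smul]
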